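/- Let G = (V,E) be a 3-sparse graph containing an edge e = uv that lies in exactly one triangle {u,v,w}, and suppose the graph G/e obtained by contracting e is not 3-sparse. Then there exists X ⊂ V with u,v ∈ X and |X| ≥ 6 such that either (a) i(X) = 3|X| - 6, or (b) w ∉ X and i(X) = 3|X| - 7. -/

import Mathlib

open Finset

variable {V : Type*} [Fintype V] [DecidableEq V]

/-- `i(X)`: the number of edges of `G` with both endpoints in `X`. -/
def edgesWithin (G : SimpleGraph V) [DecidableRel G.Adj] (X : Finset V) : ℕ :=
  ((X ×ˢ X).filter fun p => G.Adj p.1 p.2).card / 2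

/-- `d(X,Y)`: the number of edges of `G` with one endpoint in `X \ Y` and the other in `Y \ X`. -/
def edgesBetween (G : SimpleGraph V) [DecidableRel G.Adj] (X Y : Finset V) : ℕ :=
  (((X \ Y) ×ˢ (Y \ X)).filter fun p => G.Adj p.1 p.2).card

/-- `G` is 3-sparse: `i(X) ≤ 3|X| - 6` for all `X` with `|X| ≥ 3`. -/
def Sparse3 (G : SimpleGraph V) [DecidableRel G.Adj] : Prop :=
  ∀ X : Finset V, 3 ≤ X.card → edgesWithin G X + 6 ≤ 3 * X.card

/-- The set of common neighbours of `u` and `v`. -/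
def commonNbrs (G : SimpleGraph V) [DecidableRel G.Adj] (u v : V) : Finset V :=
  Finset.univ.filter fun t => G.Adj u t ∧ G.Adj v t

/-- The graph obtained from G by identifying the two vertices u and v into u
(the vertex v is removed); for adjacent u, v this is edge contraction G/uv,
with parallel edges simplified. -/
def contractPair (G : SimpleGraph V) (u v : V) : SimpleGraph {x : V // x ≠ v} where
  Adj a b := a ≠ b ∧
    (G.Adj a.1 b.1 ∨ (a.1 = u ∧ G.Adj v b.1) ∨ (b.1 = u ∧ G.Adj a.1 v))
  symm := ⟨by
    rintro a b ⟨hab, h⟩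
    refine ⟨hab.symm, ?_⟩
    rcases h with h | ⟨h1, h2⟩ | ⟨h1, h2⟩
    · exact Or.inl h.symm
    · exact Or.inr (Or.inr ⟨h1, h2.symm⟩)
    · exact Or.inr (Or.inl ⟨h1, h2.symm⟩)⟩
  loopless := ⟨fun a h => h.1 rfl⟩

instance (G : SimpleGraph V) [DecidableRel G.Adj] (u v : V) :
    DecidableRel (contractPair G u v).Adj := fun a b =>
  inferInstanceAs (Decidable (a ≠ b ∧
    (G.Adj a.1 b.1 ∨ (a.1 = u ∧ G.Adj v b.1) ∨ (b.1 = u ∧ G.Adj a.1 v))))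

lemma filter_adj_card_le' {W : Type*} [DecidableEq W] (G : SimpleGraph W) [DecidableRel G.Adj]
    (X : Finset W) :
    ((X ×ˢ X).filter fun p => G.Adj p.1 p.2).card ≤ X.card * X.card - X.card := by
  have h : ((X ×ˢ X).filter fun p => G.Adj p.1 p.2) ⊆ X.offDiag := by
    intro p hp
    simp only [mem_filter, mem_product] at hp
    exact mem_offDiag.2 ⟨hp.1.1, hp.1.2, hp.2.ne⟩
  simpa [Finset.offDiag_card] using card_le_card h

theorem stmt17 (G : SimpleGraph V) [DecidableRel G.Adj] (hsp : Sparse3 G)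
    (u v w : V) (hadj : G.Adj u v)
    (hcn : commonNbrs G u v = {w})
    (hnot : ¬ Sparse3 (contractPair G u v)) :
    ∃ X : Finset V, u ∈ X ∧ v ∈ X ∧ 6 ≤ X.card ∧
      (edgesWithin G X + 6 = 3 * X.card ∨
       (w ∉ X ∧ edgesWithin G X + 7 = 3 * X.card)) := by
  classical
  have huv : u ≠ v := hadj.ne
  have hwmem : w ∈ commonNbrs G u v := by rw [hcn]; exact mem_singleton_self w
  obtain ⟨huw, hvw⟩ : G.Adj u w ∧ G.Adj v w := (mem_filter.mp hwmem).2
  have hwv : w ≠ v := hvw.ne'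
  have hwu : w ≠ u := huw.ne'
  unfold Sparse3 at hnot
  push_neg at hnot
  obtain ⟨Y, hY3, hYlt⟩ := hnot
  set n := Y.card with hn
  set Yv : Finset V := Y.image Subtype.val with hYvdef
  have hYvcard : Yv.card = n := by
    rw [hYvdef, hn]; exact card_image_of_injective _ Subtype.val_injective
  have hvYv : v ∉ Yv := by
    intro h
    rw [hYvdef, mem_image] at h
    obtain ⟨a, _, ha⟩ := h
    exact a.2 ha
  set S' := (Y ×ˢ Y).filter (fun p => (contractPair G u v).Adj p.1 p.2) with hS'def
  have hi' : edgesWithin (contractPair G u v) Y = S'.card / 2 := by rw [hS'def]; rfl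
  rw [hi'] at hYlt
  have hsle : S'.card ≤ n * n - n := by
    have h := filter_adj_card_le' (contractPair G u v) Y
    rw [← hS'def, ← hn] at h
    exact h
  have hn5 : 5 ≤ n := by
    rcases (by omega : 5 ≤ n ∨ n = 3 ∨ n = 4) with h | h | h
    · exact h
    · rw [h] at hsle hYlt; omega
    · rw [h] at hsle hYlt; omega
  have hsplit : ∀ p : ({x : V // x ≠ v} × {x : V // x ≠ v}), p ∈ S' →
      p.1 ∈ Y ∧ p.2 ∈ Y ∧
      (G.Adj p.1.1 p.2.1 ∨
       (¬ G.Adj p.1.1 p.2.1 ∧ p.1.1 = u ∧ p.2.1 ≠ u ∧ G.Adj v p.2.1) ∨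
       (¬ G.Adj p.1.1 p.2.1 ∧ p.1.1 ≠ u ∧ p.2.1 = u ∧ G.Adj p.1.1 v)) := by
    intro p hp
    rw [hS'def, mem_filter, mem_product] at hp
    obtain ⟨⟨h1, h2⟩, hne, hd⟩ := hp
    refine ⟨h1, h2, ?_⟩
    by_cases hA : G.Adj p.1.1 p.2.1
    · exact Or.inl hA
    rcases hd with h | ⟨ha, hb⟩ | ⟨ha, hb⟩
    · exact absurd h hA
    · refine Or.inr (Or.inl ⟨hA, ha, ?_, hb⟩)
      intro h
      exact hne (Subtype.ext (ha.trans h.symm))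
    · refine Or.inr (Or.inr ⟨hA, ?_, ha, hb⟩)
      intro h
      exact hne (Subtype.ext (h.trans ha.symm))
  by_cases hu_mem : (⟨u, huv⟩ : {x : V // x ≠ v}) ∈ Y
  · -- main case: the contracted vertex lies in Y
    have huYv : u ∈ Yv := by
      rw [hYvdef]; exact mem_image_of_mem _ hu_mem
    set X : Finset V := insert v Yv with hXdef
    have huX : u ∈ X := by rw [hXdef]; exact mem_insert_of_mem huYv
    have hvX : v ∈ X := by rw [hXdef]; exact mem_insert_self _ _
    have hXcard : X.card = n + 1 := by
      rw [hXdef, card_insert_of_notMem hvYv, hYvcard]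
    set T := (X ×ˢ X).filter (fun p => G.Adj p.1 p.2) with hTdef
    have hiX : edgesWithin G X = T.card / 2 := by rw [hTdef]; rfl
    have hYvX : Yv ⊆ X := by rw [hXdef]; exact subset_insert _ _
    set Q : Finset (V × V) := {(u,v),(v,u),(v,w),(w,v)} with hQdef
    set f : ({x : V // x ≠ v} × {x : V // x ≠ v}) → V × V :=
      fun p => if G.Adj p.1.1 p.2.1 then (p.1.1, p.2.1)
               else if p.1.1 = u then (v, p.2.1) else (p.1.1, v) with hfdef
    have hmem : ∀ p ∈ S', f p ∈ T ∧ f p ∉ Q := by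
      intro p hp
      obtain ⟨h1, h2, hc⟩ := hsplit p hp
      have h1v : (p.1 : V) ∈ Yv := by rw [hYvdef]; exact mem_image_of_mem _ h1
      have h2v : (p.2 : V) ∈ Yv := by rw [hYvdef]; exact mem_image_of_mem _ h2
      rcases hc with hA | ⟨hA, hA1, hA2, hA3⟩ | ⟨hA, hA1, hA2, hA3⟩
      · have hfp : f p = (p.1.1, p.2.1) := by rw [hfdef]; exact if_pos hA
        constructor
        · rw [hfp, hTdef, mem_filter, mem_product]
          exact ⟨⟨hYvX h1v, hYvX h2v⟩, hA⟩
        · rw [hfp, hQdef]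
          simp only [mem_insert, mem_singleton, Prod.mk.injEq]
          push_neg
          have e1 : p.1.1 ≠ v := p.1.2
          have e2 : p.2.1 ≠ v := p.2.2
          exact ⟨fun _ => e2, fun h => absurd h e1, fun h => absurd h e1, fun _ => e2⟩
      · have hfp : f p = (v, p.2.1) := by
          rw [hfdef]; exact (if_neg hA).trans (if_pos hA1)
        have hnw : p.2.1 ≠ w := by
          intro h
          exact hA (by rw [hA1, h]; exact huw)
        constructor
        · rw [hfp, hTdef, mem_filter, mem_product]
          exact ⟨⟨hvX, hYvX h2v⟩, hA3⟩
        · rw [hfp, hQdef]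
          simp only [mem_insert, mem_singleton, Prod.mk.injEq]
          push_neg
          exact ⟨fun h => absurd h.symm huv, fun _ => hA2, fun _ => hnw,
            fun h => absurd h.symm hwv⟩
      · have hfp : f p = (p.1.1, v) := by
          rw [hfdef]; exact (if_neg hA).trans (if_neg hA1)
        have hnw : p.1.1 ≠ w := by
          intro h
          exact hA (by rw [hA2, h]; exact huw.symm)
        constructor
        · rw [hfp, hTdef, mem_filter, mem_product]
          exact ⟨⟨hYvX h1v, hvX⟩, hA3⟩
        · rw [hfp, hQdef]
          simp only [mem_insert, mem_singleton, Prod.mk.injEq]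
          push_neg
          exact ⟨fun h => absurd h hA1, fun h => absurd h p.1.2,
            fun h => absurd h p.1.2, fun h => absurd h hnw⟩
    have hgf : ∀ p ∈ S',
        ((if (f p).1 = v then u else (f p).1), (if (f p).2 = v then u else (f p).2))
          = (p.1.1, p.2.1) := by
      intro p hp
      obtain ⟨h1, h2, hc⟩ := hsplit p hp
      rcases hc with hA | ⟨hA, hA1, hA2, hA3⟩ | ⟨hA, hA1, hA2, hA3⟩
      · have hfp : f p = (p.1.1, p.2.1) := by rw [hfdef]; exact if_pos hA
        rw [hfp]
        simp only [if_neg p.1.2, if_neg p.2.2]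
      · have hfp : f p = (v, p.2.1) := by
          rw [hfdef]; exact (if_neg hA).trans (if_pos hA1)
        rw [hfp]
        simp [hA1, p.2.2]
      · have hfp : f p = (p.1.1, v) := by
          rw [hfdef]; exact (if_neg hA).trans (if_neg hA1)
        rw [hfp]
        simp [hA2, p.1.2]
    have hinjOn : Set.InjOn f S' := by
      intro p hp q hq hpq
      have e1 := hgf p (mem_coe.1 hp)
      have e2 := hgf q (mem_coe.1 hq)
      rw [hpq] at e1
      have e3 : ((p.1 : V), (p.2 : V)) = ((q.1 : V), (q.2 : V)) := e1.symm.trans e2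
      exact Prod.ext (Subtype.ext (congrArg Prod.fst e3)) (Subtype.ext (congrArg Prod.snd e3))
    have hcount : S'.card + (Q ∩ T).card ≤ T.card := by
      have h1 : S'.card ≤ (T \ (Q ∩ T)).card := by
        apply card_le_card_of_injOn f
        · intro p hp
          exact mem_sdiff.2 ⟨(hmem p hp).1, fun hin => (hmem p hp).2 (mem_inter.1 hin).1⟩
        · exact hinjOn
      rw [card_sdiff_of_subset inter_subset_right] at h1
      have h2 : (Q ∩ T).card ≤ T.card := card_le_card inter_subset_right
      omega
    have huvT : ((u, v) : V × V) ∈ T := by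
      rw [hTdef, mem_filter, mem_product]; exact ⟨⟨huX, hvX⟩, hadj⟩
    have hvuT : ((v, u) : V × V) ∈ T := by
      rw [hTdef, mem_filter, mem_product]; exact ⟨⟨hvX, huX⟩, hadj.symm⟩
    have hcard2 : 2 ≤ (Q ∩ T).card := by
      have hsub : ({((u : V), v), (v, u)} : Finset (V × V)) ⊆ Q ∩ T := by
        intro x hx
        rcases mem_insert.1 hx with h | h
        · subst h
          exact mem_inter.2 ⟨by rw [hQdef]; exact mem_insert_self _ _, huvT⟩
        · rw [mem_singleton] at h
          subst h
          refine mem_inter.2 ⟨by rw [hQdef]; simp, hvuT⟩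
      have hc : ({((u : V), v), (v, u)} : Finset (V × V)).card = 2 :=
        card_pair (fun h => huv (congrArg Prod.fst h))
      calc 2 = ({((u : V), v), (v, u)} : Finset (V × V)).card := hc.symm
        _ ≤ (Q ∩ T).card := card_le_card hsub
    have hcard4 : w ∈ Yv → 4 ≤ (Q ∩ T).card := by
      intro hwYv
      have hwX : w ∈ X := hYvX hwYv
      have hQsub : Q ⊆ T := by
        intro x hx
        rw [hQdef] at hx
        simp only [mem_insert, mem_singleton] at hx
        rcases hx with h | h | h | h <;> subst h <;>
          rw [hTdef, mem_filter, mem_product]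
        · exact ⟨⟨huX, hvX⟩, hadj⟩
        · exact ⟨⟨hvX, huX⟩, hadj.symm⟩
        · exact ⟨⟨hvX, hwX⟩, hvw⟩
        · exact ⟨⟨hwX, hvX⟩, hvw.symm⟩
      have hQeq : Q ∩ T = Q := inter_eq_left.2 hQsub
      have c1 : ({((v : V), w), (w, v)} : Finset (V × V)).card = 2 :=
        card_pair (fun h => hwv (congrArg Prod.fst h).symm)
      have m1 : ((v : V), u) ∉ ({((v : V), w), (w, v)} : Finset (V × V)) := by
        simp only [mem_insert, mem_singleton, Prod.mk.injEq]
        push_neg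
        exact ⟨fun _ h => hwu h.symm, fun h => absurd h.symm hwv⟩
      have c2 : ({((v : V), u), (v, w), (w, v)} : Finset (V × V)).card = 3 := by
        rw [card_insert_of_notMem m1, c1]
      have m2 : ((u : V), v) ∉ ({((v : V), u), (v, w), (w, v)} : Finset (V × V)) := by
        simp only [mem_insert, mem_singleton, Prod.mk.injEq]
        push_neg
        exact ⟨fun h => absurd h huv, fun h => absurd h huv, fun h => absurd h.symm hwu⟩
      have c3 : Q.card = 4 := by
        rw [hQdef, card_insert_of_notMem m2, c2]
      rw [hQeq, c3]
    refine ⟨X, huX, hvX, by omega, ?_⟩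
    have hspX := hsp X (by omega)
    rw [hiX, hXcard] at hspX ⊢
    by_cases hval : T.card / 2 + 6 = 3 * (n + 1)
    · exact Or.inl hval
    by_cases hwYv : w ∈ Yv
    · have h4 := hcard4 hwYv
      exact Or.inl (by omega)
    · refine Or.inr ⟨?_, by omega⟩
      rw [hXdef, mem_insert]
      push_neg
      exact ⟨hwv, hwYv⟩
  · -- degenerate case: contradiction with sparsity of G
    exfalso
    have hne_u : ∀ a : {x : V // x ≠ v}, a ∈ Y → (a : V) ≠ u := by
      intro a ha h
      have he : (⟨u, huv⟩ : {x : V // x ≠ v}) = a := Subtype.ext h.symm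
      exact hu_mem (he.symm ▸ ha)
    have hinj2 : S'.card ≤ ((Yv ×ˢ Yv).filter fun p => G.Adj p.1 p.2).card := by
      apply card_le_card_of_injOn (fun p => ((p.1 : V), (p.2 : V)))
      · intro p hp
        obtain ⟨h1, h2, hc⟩ := hsplit p hp
        have h1v : (p.1 : V) ∈ Yv := by rw [hYvdef]; exact mem_image_of_mem _ h1
        have h2v : (p.2 : V) ∈ Yv := by rw [hYvdef]; exact mem_image_of_mem _ h2
        refine mem_filter.2 ⟨mem_product.2 ⟨h1v, h2v⟩, ?_⟩
        rcases hc with hA | ⟨_, hA1, _, _⟩ | ⟨_, _, hA2, _⟩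
        · exact hA
        · exact absurd hA1 (hne_u _ h1)
        · exact absurd hA2 (hne_u _ h2)
      · intro p _ q _ hpq
        exact Prod.ext (Subtype.ext (congrArg Prod.fst hpq))
          (Subtype.ext (congrArg Prod.snd hpq))
    have h3 : 3 ≤ Yv.card := by omega
    have hspYv := hsp Yv h3
    have hiYv : edgesWithin G Yv = ((Yv ×ˢ Yv).filter fun p => G.Adj p.1 p.2).card / 2 := rfl
    rw [hiYv, hYvcard] at hspYv
    omega
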